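/- Let (g^j)_{j=1}^{K} be vectors in ℝ^d with ‖g^j‖ ≤ G for all j, let v^k := ∑_{j=1}^k ‖g^j‖², δ > 0, and let m^k := (1−β) ∑_{j=1}^{k−1} β^{k−1−j} g^j for 0 ≤ β < 1. Then ∑_{k=1}^K ‖m^k‖²/(v^k + δ) ≤ ln((δ + (K−1)G²)/δ). -/

import Mathlib

open Finset

private lemma logstep (a b : ℝ) (ha : 0 ≤ a) (hb : 0 < b) :
    a / (b + a) ≤ Real.log (b + a) - Real.log b := by
  have hba : 0 < b + a := by linarith
  have h1 : Real.log b - Real.log (b + a) ≤ b / (b + a) - 1 := by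
    rw [← Real.log_div hb.ne' hba.ne']
    exact Real.log_le_sub_one_of_pos (by positivity)
  have h2 : a / (b + a) = 1 - b / (b + a) := by field_simp; ring
  linarith

private lemma geom_bound (β : ℝ) (hβ0 : 0 ≤ β) (n : ℕ) :
    (1 - β) * ∑ i ∈ range n, β ^ i ≤ 1 := by
  have h := geom_sum_mul β n
  have h2 : (0:ℝ) ≤ β ^ n := by positivity
  nlinarith [h]

private lemma sum_pow_Icc (β : ℝ) (n : ℕ) :
    ∑ j ∈ Finset.Icc 1 n, β ^ (n - j) = ∑ i ∈ Finset.range n, β ^ i := by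
  rw [← Finset.Ico_add_one_right_eq_Icc, Finset.sum_Ico_eq_sum_range]
  simp only [Nat.add_sub_cancel]
  rw [← Finset.sum_range_reflect]
  apply Finset.sum_congr rfl
  intro i hi
  congr 1
  simp only [Finset.mem_range] at hi
  omega

private lemma sum_pow_Icc' (β : ℝ) (j K : ℕ) :
    ∑ k ∈ Finset.Icc (j+1) K, β ^ (k - 1 - j) = ∑ i ∈ Finset.range (K - j), β ^ i := by
  rw [← Finset.Ico_add_one_right_eq_Icc, Finset.sum_Ico_eq_sum_range]
  apply Finset.sum_congr (by congr 1; omega)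
  intro i _
  congr 1
  omega

private lemma telescope (δ : ℝ) (hδ : 0 < δ) (a : ℕ → ℝ) (ha : ∀ j, 0 ≤ a j)
    (v : ℕ → ℝ) (hv : ∀ k, v k = ∑ j ∈ Finset.Icc 1 k, a j) (n : ℕ) :
    ∑ j ∈ Finset.Icc 1 n, a j / (v j + δ) ≤ Real.log (v n + δ) - Real.log δ := by
  induction n with
  | zero =>
    rw [show Finset.Icc 1 0 = (∅ : Finset ℕ) from Finset.Icc_eq_empty (by omega)]
    simp [hv 0, Finset.Icc_eq_empty (show ¬(1:ℕ) ≤ 0 by omega)]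
  | succ n ih =>
    have hvn : 0 ≤ v n := by rw [hv]; exact Finset.sum_nonneg fun j _ => ha j
    have hstep : v (n+1) = v n + a (n+1) := by
      rw [hv, hv, Finset.sum_Icc_succ_top (by omega)]
    rw [Finset.sum_Icc_succ_top (by omega : 1 ≤ n + 1)]
    have hls := logstep (a (n+1)) (v n + δ) (ha _) (by linarith)
    have hrw : v n + δ + a (n+1) = v (n+1) + δ := by rw [hstep]; ring
    rw [hrw] at hls
    linarith

theorem momentum_log_bound {d : ℕ} (β δ G : ℝ) (hβ0 : 0 ≤ β) (hβ1 : β < 1) (hδ : 0 < δ)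
    (hG : 0 ≤ G) (K : ℕ) (hK : 1 ≤ K)
    (g : ℕ → EuclideanSpace ℝ (Fin d))
    (hg : ∀ j ∈ Finset.Icc 1 K, ‖g j‖ ≤ G)
    (v : ℕ → ℝ) (hv : ∀ k, v k = ∑ j ∈ Finset.Icc 1 k, ‖g j‖ ^ 2)
    (m : ℕ → EuclideanSpace ℝ (Fin d))
    (hm : ∀ k, m k = (1 - β) • ∑ j ∈ Finset.Icc 1 (k - 1), β ^ (k - 1 - j) • g j) :
    ∑ k ∈ Finset.Icc 1 K, ‖m k‖ ^ 2 / (v k + δ)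
      ≤ Real.log ((δ + ((K : ℝ) - 1) * G ^ 2) / δ) := by
  have hvnn : ∀ k, 0 ≤ v k := fun k => by rw [hv]; positivity
  have hvpos : ∀ k, 0 < v k + δ := fun k => by have := hvnn k; linarith
  have hvmono : ∀ j k, j ≤ k → v j ≤ v k := by
    intro j k hjk
    rw [hv, hv]
    apply Finset.sum_le_sum_of_subset_of_nonneg (Finset.Icc_subset_Icc_right hjk)
    intro i _ _; positivity
  have hβ' : (0:ℝ) ≤ 1 - β := by linarith
  -- Step 1: Jensen / Cauchy–Schwarz bound on ‖m k‖²
  have hm2 : ∀ k, ‖m k‖ ^ 2 ≤ ∑ j ∈ Finset.Icc 1 (k-1), (1-β) * β ^ (k-1-j) * ‖g j‖ ^ 2 := by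
    intro k
    have hn : ‖m k‖ ≤ ∑ j ∈ Finset.Icc 1 (k-1), (1-β) * β ^ (k-1-j) * ‖g j‖ := by
      rw [hm k, norm_smul, Real.norm_eq_abs, abs_of_nonneg hβ']
      have h1 : ‖∑ j ∈ Finset.Icc 1 (k-1), β ^ (k-1-j) • g j‖
          ≤ ∑ j ∈ Finset.Icc 1 (k-1), β ^ (k-1-j) * ‖g j‖ := by
        refine (norm_sum_le _ _).trans_eq (Finset.sum_congr rfl fun j _ => ?_)
        rw [norm_smul, Real.norm_eq_abs, abs_of_nonneg (by positivity)]
      calc (1-β) * ‖∑ j ∈ Finset.Icc 1 (k-1), β ^ (k-1-j) • g j‖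
          ≤ (1-β) * ∑ j ∈ Finset.Icc 1 (k-1), β ^ (k-1-j) * ‖g j‖ :=
            mul_le_mul_of_nonneg_left h1 hβ'
        _ = ∑ j ∈ Finset.Icc 1 (k-1), (1-β) * β ^ (k-1-j) * ‖g j‖ := by
            rw [Finset.mul_sum]; exact Finset.sum_congr rfl fun j _ => by ring
    have hcs : (∑ j ∈ Finset.Icc 1 (k-1), (1-β) * β ^ (k-1-j) * ‖g j‖) ^ 2
        ≤ (∑ j ∈ Finset.Icc 1 (k-1), (1-β) * β ^ (k-1-j)) *
          ∑ j ∈ Finset.Icc 1 (k-1), (1-β) * β ^ (k-1-j) * ‖g j‖ ^ 2 := by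
      apply Finset.sum_sq_le_sum_mul_sum_of_sq_eq_mul
      · intro j _; positivity
      · intro j _; positivity
      · intro j _; ring
    have hwsum : ∑ j ∈ Finset.Icc 1 (k-1), (1-β) * β ^ (k-1-j) ≤ 1 := by
      rw [← Finset.mul_sum, sum_pow_Icc β (k-1)]
      exact geom_bound β hβ0 (k-1)
    have hS2 : 0 ≤ ∑ j ∈ Finset.Icc 1 (k-1), (1-β) * β ^ (k-1-j) * ‖g j‖ ^ 2 :=
      Finset.sum_nonneg fun j _ => by positivity
    calc ‖m k‖ ^ 2 ≤ (∑ j ∈ Finset.Icc 1 (k-1), (1-β) * β ^ (k-1-j) * ‖g j‖) ^ 2 :=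
          pow_le_pow_left₀ (norm_nonneg _) hn 2
      _ ≤ (∑ j ∈ Finset.Icc 1 (k-1), (1-β) * β ^ (k-1-j)) *
          ∑ j ∈ Finset.Icc 1 (k-1), (1-β) * β ^ (k-1-j) * ‖g j‖ ^ 2 := hcs
      _ ≤ 1 * ∑ j ∈ Finset.Icc 1 (k-1), (1-β) * β ^ (k-1-j) * ‖g j‖ ^ 2 :=
          mul_le_mul_of_nonneg_right hwsum hS2
      _ = _ := one_mul _
  -- Step 2: per-k bound with denominators v j + δ
  have hterm : ∀ k ∈ Finset.Icc 1 K, ‖m k‖ ^ 2 / (v k + δ)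
      ≤ ∑ j ∈ Finset.Icc 1 (k-1), (1-β) * β ^ (k-1-j) * ‖g j‖ ^ 2 / (v j + δ) := by
    intro k _
    calc ‖m k‖ ^ 2 / (v k + δ)
        ≤ (∑ j ∈ Finset.Icc 1 (k-1), (1-β) * β ^ (k-1-j) * ‖g j‖ ^ 2) / (v k + δ) := by
          exact div_le_div_of_nonneg_right (hm2 k) (hvpos k).le |>.trans_eq rfl
      _ = ∑ j ∈ Finset.Icc 1 (k-1), (1-β) * β ^ (k-1-j) * ‖g j‖ ^ 2 / (v k + δ) :=
          Finset.sum_div _ _ _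
      _ ≤ ∑ j ∈ Finset.Icc 1 (k-1), (1-β) * β ^ (k-1-j) * ‖g j‖ ^ 2 / (v j + δ) := by
          apply Finset.sum_le_sum
          intro j hj
          simp only [Finset.mem_Icc] at hj
          have hj' : v j + δ ≤ v k + δ := by
            have := hvmono j k (by omega); linarith
          apply div_le_div_of_nonneg_left (by positivity) (hvpos j) hj'
  -- Step 3: swap sums and bound the geometric weights
  have hswap : ∑ k ∈ Finset.Icc 1 K, ∑ j ∈ Finset.Icc 1 (k-1),
        (1-β) * β ^ (k-1-j) * ‖g j‖ ^ 2 / (v j + δ)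
      = ∑ j ∈ Finset.Icc 1 (K-1), ∑ k ∈ Finset.Icc (j+1) K,
        (1-β) * β ^ (k-1-j) * ‖g j‖ ^ 2 / (v j + δ) := by
    apply Finset.sum_comm'
    intro k j
    simp only [Finset.mem_Icc]
    omega
  have hinner : ∀ j ∈ Finset.Icc 1 (K-1),
      ∑ k ∈ Finset.Icc (j+1) K, (1-β) * β ^ (k-1-j) * ‖g j‖ ^ 2 / (v j + δ)
        ≤ ‖g j‖ ^ 2 / (v j + δ) := by
    intro j _
    have heq : ∑ k ∈ Finset.Icc (j+1) K, (1-β) * β ^ (k-1-j) * ‖g j‖ ^ 2 / (v j + δ)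
        = ((1-β) * ∑ i ∈ Finset.range (K-j), β ^ i) * (‖g j‖ ^ 2 / (v j + δ)) := by
      rw [← sum_pow_Icc' β j K, Finset.mul_sum, Finset.sum_mul]
      exact Finset.sum_congr rfl fun k _ => by ring
    rw [heq]
    have h1 := geom_bound β hβ0 (K-j)
    have h2 : (0:ℝ) ≤ ‖g j‖ ^ 2 / (v j + δ) := by
      have := hvpos j; positivity
    calc ((1-β) * ∑ i ∈ Finset.range (K-j), β ^ i) * (‖g j‖ ^ 2 / (v j + δ))
        ≤ 1 * (‖g j‖ ^ 2 / (v j + δ)) := mul_le_mul_of_nonneg_right h1 h2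
      _ = _ := one_mul _
  -- Step 4: telescoping log bound
  have htel := telescope δ hδ (fun j => ‖g j‖ ^ 2) (fun j => by positivity) v hv (K-1)
  have hvK : v (K-1) ≤ ((K:ℝ) - 1) * G ^ 2 := by
    rw [hv]
    calc ∑ j ∈ Finset.Icc 1 (K-1), ‖g j‖ ^ 2 ≤ ∑ _j ∈ Finset.Icc 1 (K-1), G ^ 2 := by
          apply Finset.sum_le_sum
          intro j hj
          simp only [Finset.mem_Icc] at hj
          exact pow_le_pow_left₀ (norm_nonneg _) (hg j (Finset.mem_Icc.mpr ⟨hj.1, by omega⟩)) 2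
      _ = ((K-1 : ℕ) : ℝ) * G ^ 2 := by
          rw [Finset.sum_const, Nat.card_Icc]
          simp [nsmul_eq_mul]
      _ = ((K:ℝ) - 1) * G ^ 2 := by
          rw [Nat.cast_sub hK]; norm_num
  have hKpos : (0:ℝ) < δ + ((K:ℝ) - 1) * G ^ 2 := by
    have h1 : (1:ℝ) ≤ (K:ℝ) := by exact_mod_cast hK
    nlinarith
  have hlog : Real.log (v (K-1) + δ) ≤ Real.log (δ + ((K:ℝ) - 1) * G ^ 2) :=
    Real.log_le_log (hvpos _) (by linarith)
  calc ∑ k ∈ Finset.Icc 1 K, ‖m k‖ ^ 2 / (v k + δ)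
      ≤ ∑ k ∈ Finset.Icc 1 K, ∑ j ∈ Finset.Icc 1 (k-1),
          (1-β) * β ^ (k-1-j) * ‖g j‖ ^ 2 / (v j + δ) := Finset.sum_le_sum hterm
    _ = ∑ j ∈ Finset.Icc 1 (K-1), ∑ k ∈ Finset.Icc (j+1) K,
          (1-β) * β ^ (k-1-j) * ‖g j‖ ^ 2 / (v j + δ) := hswap
    _ ≤ ∑ j ∈ Finset.Icc 1 (K-1), ‖g j‖ ^ 2 / (v j + δ) := Finset.sum_le_sum hinner
    _ ≤ Real.log (v (K-1) + δ) - Real.log δ := htel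
    _ ≤ Real.log (δ + ((K:ℝ) - 1) * G ^ 2) - Real.log δ := by linarith
    _ = Real.log ((δ + ((K:ℝ) - 1) * G ^ 2) / δ) :=
        (Real.log_div hKpos.ne' hδ.ne').symm
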